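/- arXiv:1511.04519 — 2 statements merged into one kernel-verified Lean document; each statement's English description precedes it below -/
import Mathlib

section
/- If h̃_{m+1,m} = 0 in the shift-and-invert Arnoldi process (invariant subspace), then for all h ≥ 0, e^{hA} v = ‖v‖ V_m e^{h H_m} e₁ where H_m = (I − H̃_m⁻¹)/γ. -/
open Matrix NormedSpace

section
attribute [local instance] Matrix.linftyOpNormedRing Matrix.linftyOpNormedAlgebra

theorem exp_intertwine {n m : ℕ} (A : Matrix (Fin n) (Fin n) ℝ)
    (B : Matrix (Fin m) (Fin m) ℝ) (V : Matrix (Fin n) (Fin m) ℝ)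
    (h : A * V = V * B) : exp A * V = V * exp B := by
  have hk : ∀ k : ℕ, A ^ k * V = V * B ^ k := by
    intro k
    induction k with
    | zero => simp
    | succ k ih => rw [pow_succ, pow_succ, Matrix.mul_assoc, h, ← Matrix.mul_assoc, ih, Matrix.mul_assoc]
  let L : Matrix (Fin n) (Fin n) ℝ →L[ℝ] Matrix (Fin n) (Fin m) ℝ :=
    LinearMap.toContinuousLinearMap
      { toFun := fun X => X * V
        map_add' := fun X Y => Matrix.add_mul X Y V
        map_smul' := fun c X => Matrix.smul_mul c X V }
  let R : Matrix (Fin m) (Fin m) ℝ →L[ℝ] Matrix (Fin n) (Fin m) ℝ :=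
    LinearMap.toContinuousLinearMap
      { toFun := fun X => V * X
        map_add' := fun X Y => Matrix.mul_add V X Y
        map_smul' := fun c X => Matrix.mul_smul V c X }
  have hLA : exp A * V = L (exp A) := rfl
  have hRB : V * exp B = R (exp B) := rfl
  rw [hLA, hRB, exp_eq_tsum ℝ, exp_eq_tsum ℝ,
    L.map_tsum (expSeries_summable' (𝕂 := ℝ) A),
    R.map_tsum (expSeries_summable' (𝕂 := ℝ) B)]
  congr 1
  funext k
  show (k.factorial : ℝ)⁻¹ • A ^ k * V = V * ((k.factorial : ℝ)⁻¹ • B ^ k)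
  rw [Matrix.smul_mul, Matrix.mul_smul, hk]
end
/-- Exactness of the shift-and-invert (rational) Krylov approximation at an
invariant subspace: if `(I - γA)⁻¹ V_m = V_m H̃_m` (i.e. `h̃_{m+1,m} = 0`),
`V_m` has orthonormal columns, `v = ‖v‖ V_m e₁` and `H̃_m` is invertible, then
for all `h ≥ 0`, `e^{hA} v = ‖v‖ V_m e^{h H_m} e₁` with `H_m = (I - H̃_m⁻¹)/γ`. -/
theorem stmt9 {n m : ℕ} (hm : 0 < m)
    (A : Matrix (Fin n) (Fin n) ℝ) (γ : ℝ) (hγ : 0 < γ)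
    (hinv : IsUnit (1 - γ • A).det)
    (V : Matrix (Fin n) (Fin m) ℝ) (Ht : Matrix (Fin m) (Fin m) ℝ)
    (hHt : IsUnit Ht.det)
    (v : Fin n → ℝ) (hv : v ≠ 0)
    (horth : Vᵀ * V = 1)
    (harnoldi : (1 - γ • A)⁻¹ * V = V * Ht)
    (hv1 : v = ‖v‖ • V.mulVec (Pi.single ⟨0, hm⟩ 1)) :
    ∀ h : ℝ, 0 ≤ h →
      (exp (h • A)).mulVec v =
        ‖v‖ • V.mulVec
          ((exp (h • (γ⁻¹ • (1 - Ht⁻¹)))).mulVec (Pi.single ⟨0, hm⟩ 1)) := by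
  intro h _
  set H : Matrix (Fin m) (Fin m) ℝ := γ⁻¹ • (1 - Ht⁻¹) with hH
  -- A * V = V * H
  have h1 : V = (1 - γ • A) * (V * Ht) := by
    rw [← harnoldi, ← Matrix.mul_assoc, Matrix.mul_nonsing_inv _ hinv, Matrix.one_mul]
  have h2 : V * Ht⁻¹ = (1 - γ • A) * V := by
    conv_lhs => rw [h1]
    rw [Matrix.mul_assoc, Matrix.mul_assoc, Matrix.mul_nonsing_inv _ hHt, Matrix.mul_one]
  have hAV : A * V = V * H := by
    rw [hH, Matrix.mul_smul, Matrix.mul_sub, Matrix.mul_one, h2, Matrix.sub_mul,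
      Matrix.one_mul, Matrix.smul_mul]
    rw [sub_sub_cancel, smul_smul, inv_mul_cancel₀ hγ.ne', one_smul]
  have hAVh : (h • A) * V = V * (h • H) := by
    rw [Matrix.smul_mul, Matrix.mul_smul, hAV]
  have key := exp_intertwine (h • A) (h • H) V hAVh
  conv_lhs => rw [hv1]
  rw [Matrix.mulVec_smul, Matrix.mulVec_mulVec, key, ← Matrix.mulVec_mulVec]
end

section
/- Residual identity for the standard Krylov approximation: defining y_m(h) = ‖v‖ V_m e^{h H_m} e₁, its derivative satisfies y'_m(h) − A y_m(h) = −‖v‖ h_{m+1,m} (e_mᵀ e^{h H_m} e₁) v_{m+1}, so the residual norm equals ‖v‖ · h_{m+1,m} · |e_mᵀ e^{h H_m} e₁|. -/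
open Matrix NormedSpace

lemma vecMulVec_mulVec' {n m : ℕ} (w : Fin n → ℝ) (f : Fin m → ℝ) (u : Fin m → ℝ) :
    (vecMulVec w f).mulVec u = (f ⬝ᵥ u) • w := by
  funext i
  simp [mulVec, dotProduct, vecMulVec_apply, Finset.mul_sum, mul_assoc, mul_comm, mul_left_comm]

/-- Residual identity for the standard Krylov approximation: with
`y_m(h) = ‖v‖ V_m e^{h H_m} e₁` one has
`y'_m(h) - A y_m(h) = -‖v‖ h_{m+1,m} (e_mᵀ e^{h H_m} e₁) v_{m+1}`,
so the residual norm equals `‖v‖ h_{m+1,m} |e_mᵀ e^{h H_m} e₁|`. -/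
theorem stmt14 {n m : ℕ} (hm : 0 < m)
    (A : Matrix (Fin n) (Fin n) ℝ)
    (V : Matrix (Fin n) (Fin m) ℝ) (H : Matrix (Fin m) (Fin m) ℝ)
    (h1 : ℝ) (hh1 : 0 ≤ h1) (w : Fin n → ℝ) (hwnorm : ‖w‖ = 1)
    (v : Fin n → ℝ) (hv : v ≠ 0)
    (horth : Vᵀ * V = 1)
    (harnoldi : A * V = V * H +
      h1 • vecMulVec w (fun j : Fin m => if (j : ℕ) = m - 1 then 1 else 0))
    (hv1 : v = ‖v‖ • V.mulVec (Pi.single ⟨0, hm⟩ 1)) :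
    ∀ h : ℝ,
      HasDerivAt
        (fun s : ℝ => ‖v‖ • V.mulVec ((exp (s • H)).mulVec (Pi.single ⟨0, hm⟩ 1)))
        (A.mulVec (‖v‖ • V.mulVec ((exp (h • H)).mulVec (Pi.single ⟨0, hm⟩ 1))) -
          (‖v‖ * h1 *
            ((fun j : Fin m => if (j : ℕ) = m - 1 then (1:ℝ) else 0) ⬝ᵥ
              (exp (h • H)).mulVec (Pi.single ⟨0, hm⟩ 1))) • w) h ∧
      ‖(‖v‖ * h1 *
          ((fun j : Fin m => if (j : ℕ) = m - 1 then (1:ℝ) else 0) ⬝ᵥ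
            (exp (h • H)).mulVec (Pi.single ⟨0, hm⟩ 1))) • w‖ =
        ‖v‖ * h1 *
          |(fun j : Fin m => if (j : ℕ) = m - 1 then (1:ℝ) else 0) ⬝ᵥ
            (exp (h • H)).mulVec (Pi.single ⟨0, hm⟩ 1)| := by
  intro h
  constructor
  · letI := Matrix.linftyOpNormedRing (n := Fin m) (α := ℝ)
    letI := Matrix.linftyOpNormedAlgebra (R := ℝ) (n := Fin m) (α := ℝ)
    have hexp : HasDerivAt (fun s : ℝ => exp (s • H)) (H * exp (h • H)) h :=
      hasDerivAt_exp_smul_const' H h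
    -- linear map from matrices to vectors
    let L : Matrix (Fin m) (Fin m) ℝ →ₗ[ℝ] (Fin n → ℝ) :=
      { toFun := fun M => ‖v‖ • V.mulVec (M.mulVec (Pi.single ⟨0, hm⟩ 1))
        map_add' := by
          intro M N
          show ‖v‖ • V.mulVec ((M + N).mulVec _) = _
          rw [Matrix.add_mulVec, Matrix.mulVec_add, smul_add]
        map_smul' := by
          intro c M
          show ‖v‖ • V.mulVec ((c • M).mulVec _) = _
          rw [Matrix.smul_mulVec, Matrix.mulVec_smul, smul_comm]
          rfl }
    have hL : HasDerivAt (fun s : ℝ => L (exp (s • H))) (L (H * exp (h • H))) h :=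
      (L.toContinuousLinearMap.hasFDerivAt.comp_hasDerivAt h hexp)
    convert hL using 1
    show _ = ‖v‖ • V.mulVec ((H * exp (h • H)).mulVec (Pi.single ⟨0, hm⟩ 1))
    set u := (exp (h • H)).mulVec (Pi.single ⟨0, hm⟩ 1) with hu
    set f := (fun j : Fin m => if (j : ℕ) = m - 1 then (1:ℝ) else 0) with hf
    have key : A.mulVec (V.mulVec u) = V.mulVec (H.mulVec u) + (f ⬝ᵥ u) • h1 • w := by
      rw [Matrix.mulVec_mulVec, harnoldi, Matrix.add_mulVec, Matrix.smul_mulVec,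
        vecMulVec_mulVec', ← Matrix.mulVec_mulVec]
      module
    rw [Matrix.mulVec_smul, key, smul_add, ← Matrix.mulVec_mulVec]
    module
    exact funext fun s => rfl
  · rw [norm_smul, hwnorm, mul_one, Real.norm_eq_abs, abs_mul, abs_mul,
      abs_of_nonneg (norm_nonneg v), abs_of_nonneg hh1]
end
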